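/- Let $(l_1,m_1),\dots,(l_r,m_r)$ be $r\ge 1$ pairs of non-negative integers with $l_i+m_i\ge 1$ for each $i$, $l=\sum_i l_i\ge 2$, $m=\sum_i m_i\ge 2$. Then equality $(l-1)(m-1)-1 = \sum_{i=1}^r l_i m_i - \max_i(l_i+m_i)$ holds if and only if either $r=1$, or $r=2$ and $(l_1,m_1)=(l_2,m_2)=(1,1)$. -/
import Mathlib

set_option maxHeartbeats 1000000

lemma sum_mul_le {r : ℕ} (l m : Fin r → ℕ) (s : Finset (Fin r)) :
    ∑ t ∈ s, l t * m t ≤ (∑ t ∈ s, l t) * (∑ t ∈ s, m t) := by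
  rw [Finset.sum_mul_sum]
  exact Finset.sum_le_sum fun i hi =>
    Finset.single_le_sum (f := fun k => l i * m k) (fun k _ => Nat.zero_le _) hi

lemma sum_mul_cross {r : ℕ} (l m : Fin r → ℕ) (s : Finset (Fin r)) {i k : Fin r}
    (hik : i ≠ k) (hi : i ∈ s) (hk : k ∈ s) :
    (∑ t ∈ s, l t * m t) + l i * m k ≤ (∑ t ∈ s, l t) * (∑ t ∈ s, m t) := by
  have e1 : ∑ t ∈ s, l t * m t = l i * m i + ∑ t ∈ s.erase i, l t * m t :=
    (Finset.add_sum_erase s (fun t => l t * m t) hi).symm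
  have e2 : ∑ t ∈ s, l t = l i + ∑ t ∈ s.erase i, l t :=
    (Finset.add_sum_erase s l hi).symm
  have h3 := sum_mul_le l m (s.erase i)
  have h4 : (∑ t ∈ s.erase i, m t) ≤ ∑ t ∈ s, m t :=
    Finset.sum_le_sum_of_subset (Finset.erase_subset _ _)
  have h5 : m i + m k ≤ ∑ t ∈ s, m t := by
    have hsub : ({i, k} : Finset (Fin r)) ⊆ s := by
      intro t ht
      rcases Finset.mem_insert.mp ht with rfl | ht
      · exact hi
      · rw [Finset.mem_singleton.mp ht]; exact hk
    calc m i + m k = ∑ t ∈ ({i, k} : Finset (Fin r)), m t := (Finset.sum_pair hik).symm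
      _ ≤ ∑ t ∈ s, m t := Finset.sum_le_sum_of_subset hsub
  calc (∑ t ∈ s, l t * m t) + l i * m k
      = l i * (m i + m k) + ∑ t ∈ s.erase i, l t * m t := by rw [e1]; ring
    _ ≤ l i * (∑ t ∈ s, m t) + (∑ t ∈ s.erase i, l t) * (∑ t ∈ s, m t) :=
        Nat.add_le_add (Nat.mul_le_mul le_rfl h5) (h3.trans (Nat.mul_le_mul le_rfl h4))
    _ = (∑ t ∈ s, l t) * (∑ t ∈ s, m t) := by rw [e2]; ring

theorem stmt_1 (r : ℕ) (hr : 0 < r) (l m : Fin r → ℕ)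
    (hlm : ∀ i, 1 ≤ l i + m i)
    (hl : 2 ≤ ∑ i, l i) (hm : 2 ≤ ∑ i, m i) :
    ((∑ i, l i : ℕ) - 1 : ℤ) * ((∑ i, m i : ℕ) - 1) - 1 =
      (∑ i, (l i : ℤ) * m i) -
        Finset.univ.sup' (Finset.univ_nonempty_iff.mpr (Fin.pos_iff_nonempty.mp hr))
          (fun i => (l i : ℤ) + m i) ↔
      (r = 1 ∨ (r = 2 ∧ ∀ i, l i = 1 ∧ m i = 1)) := by
  obtain ⟨j, -, hj⟩ := Finset.exists_mem_eq_sup'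
    (Finset.univ_nonempty_iff.mpr (Fin.pos_iff_nonempty.mp hr))
    (fun i => (l i : ℤ) + m i)
  rw [hj]
  have hmax : ∀ i, l i + m i ≤ l j + m j := by
    intro i
    have h1 : ((l i : ℤ) + m i) ≤ (l j : ℤ) + m j := by
      rw [← hj]
      exact Finset.le_sup' (fun i => (l i : ℤ) + m i) (Finset.mem_univ i)
    exact_mod_cast h1
  constructor
  · intro h
    by_cases hr1 : r = 1
    · exact Or.inl hr1
    right
    have hr2 : 2 ≤ r := by omega
    set E := Finset.univ.erase j with hE
    have hEne : E.Nonempty := by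
      rw [← Finset.card_pos, hE, Finset.card_erase_of_mem (Finset.mem_univ j),
        Finset.card_univ, Fintype.card_fin]
      omega
    have el : (∑ i, l i) = l j + ∑ i ∈ E, l i :=
      (Finset.add_sum_erase _ l (Finset.mem_univ j)).symm
    have em : (∑ i, m i) = m j + ∑ i ∈ E, m i :=
      (Finset.add_sum_erase _ m (Finset.mem_univ j)).symm
    have es : (∑ i, (l i : ℤ) * m i) = (l j : ℤ) * m j + ∑ i ∈ E, (l i : ℤ) * m i :=
      (Finset.add_sum_erase _ (fun i => (l i : ℤ) * m i) (Finset.mem_univ j)).symm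
    set La := ∑ i ∈ E, l i with hLa
    set Ma := ∑ i ∈ E, m i with hMa
    set Sa := ∑ i ∈ E, l i * m i with hSa
    have esE : (∑ i ∈ E, (l i : ℤ) * m i) = (Sa : ℤ) := by rw [hSa]; push_cast; rfl
    have hLc : ((∑ i, l i : ℕ) : ℤ) = (l j : ℤ) + (La : ℤ) := by rw [el]; push_cast; ring
    have hMc : ((∑ i, m i : ℕ) : ℤ) = (m j : ℤ) + (Ma : ℤ) := by rw [em]; push_cast; ring
    rw [hLc, hMc, es, esE] at h
    have star : (l j : ℤ) * Ma + (m j : ℤ) * La + (La : ℤ) * Ma - Sa = La + Ma := by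
      linear_combination h
    have hSa1 : (Sa : ℤ) ≤ (La : ℤ) * Ma := by exact_mod_cast sum_mul_le l m E
    have hL2 : 2 ≤ l j + La := el ▸ hl
    have hM2 : 2 ≤ m j + Ma := em ▸ hm
    have hLa0 : (0 : ℤ) ≤ La := Int.natCast_nonneg _
    have hMa0 : (0 : ℤ) ≤ Ma := Int.natCast_nonneg _
    have hSa0 : (0 : ℤ) ≤ Sa := Int.natCast_nonneg _
    -- rule out l j = 0
    have hA : 1 ≤ l j := by
      by_contra hA0
      have hA0' : l j = 0 := by omega
      have hAz : (l j : ℤ) = 0 := by exact_mod_cast hA0'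
      have hLa2 : (2 : ℤ) ≤ La := by exact_mod_cast (by omega : 2 ≤ La)
      have ineq3 : Sa + La ≤ m j * La := by
        have hpt : ∀ t ∈ E, l t * m t + l t ≤ l t * m j := by
          intro t ht
          have h1 := hmax t
          rcases Nat.eq_zero_or_pos (l t) with h0 | h0
          · simp [h0]
          · have h2 : m t + 1 ≤ m j := by omega
            calc l t * m t + l t = l t * (m t + 1) := by ring
              _ ≤ l t * m j := Nat.mul_le_mul le_rfl h2
        calc Sa + La = ∑ t ∈ E, (l t * m t + l t) := by
              rw [hSa, hLa, ← Finset.sum_add_distrib]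
          _ ≤ ∑ t ∈ E, l t * m j := Finset.sum_le_sum hpt
          _ = m j * La := by rw [hLa, Finset.mul_sum]; exact Finset.sum_congr rfl fun t _ => by ring
      have i3 : (Sa : ℤ) + La ≤ (m j : ℤ) * La := by exact_mod_cast ineq3
      rw [hAz] at star
      have k1 : (La : ℤ) * Ma ≤ Ma := by linarith
      have hxp : (2 : ℤ) * Ma ≤ (La : ℤ) * Ma := mul_le_mul_of_nonneg_right hLa2 hMa0
      have hxz : (Ma : ℤ) = 0 := le_antisymm (by linarith) hMa0
      rw [hxz] at star hSa1
      have hmj2 : (2 : ℤ) ≤ (m j : ℤ) := by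
        have h2' : 2 ≤ m j := by
          have : Ma = 0 := by exact_mod_cast hxz
          omega
        exact_mod_cast h2'
      have h2L : (2 : ℤ) * La ≤ (m j : ℤ) * La := mul_le_mul_of_nonneg_right hmj2 hLa0
      linarith
    have hB : 1 ≤ m j := by
      by_contra hB0
      have hB0' : m j = 0 := by omega
      have hBz : (m j : ℤ) = 0 := by exact_mod_cast hB0'
      have hMa2 : (2 : ℤ) ≤ Ma := by exact_mod_cast (by omega : 2 ≤ Ma)
      have ineq3 : Sa + Ma ≤ l j * Ma := by
        have hpt : ∀ t ∈ E, l t * m t + m t ≤ m t * l j := by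
          intro t ht
          have h1 := hmax t
          rcases Nat.eq_zero_or_pos (m t) with h0 | h0
          · simp [h0]
          · have h2 : l t + 1 ≤ l j := by omega
            calc l t * m t + m t = m t * (l t + 1) := by ring
              _ ≤ m t * l j := Nat.mul_le_mul le_rfl h2
        calc Sa + Ma = ∑ t ∈ E, (l t * m t + m t) := by
              rw [hSa, hMa, ← Finset.sum_add_distrib]
          _ ≤ ∑ t ∈ E, m t * l j := Finset.sum_le_sum hpt
          _ = l j * Ma := by rw [hMa, Finset.mul_sum]; exact Finset.sum_congr rfl fun t _ => by ring
      have i3 : (Sa : ℤ) + Ma ≤ (l j : ℤ) * Ma := by exact_mod_cast ineq3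
      rw [hBz] at star
      have k1 : (La : ℤ) * Ma ≤ La := by linarith
      have hxp : (La : ℤ) * 2 ≤ (La : ℤ) * Ma := mul_le_mul_of_nonneg_left hMa2 hLa0
      have hxz : (La : ℤ) = 0 := le_antisymm (by linarith) hLa0
      rw [hxz] at star hSa1
      have hlj2 : (2 : ℤ) ≤ (l j : ℤ) := by
        have h2' : 2 ≤ l j := by
          have : La = 0 := by exact_mod_cast hxz
          omega
        exact_mod_cast h2'
      have h2M : (2 : ℤ) * Ma ≤ (l j : ℤ) * Ma := mul_le_mul_of_nonneg_right hlj2 hMa0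
      linarith
    -- now l j ≥ 1 and m j ≥ 1
    have hA1 : (1 : ℤ) ≤ (l j : ℤ) := by exact_mod_cast hA
    have hB1 : (1 : ℤ) ≤ (m j : ℤ) := by exact_mod_cast hB
    have t1 : (0 : ℤ) ≤ ((l j : ℤ) - 1) * Ma := mul_nonneg (by linarith) hMa0
    have t2 : (0 : ℤ) ≤ ((m j : ℤ) - 1) * La := mul_nonneg (by linarith) hLa0
    have t3 : (0 : ℤ) ≤ (La : ℤ) * Ma - Sa := by linarith
    have k1 : ((l j : ℤ) - 1) * Ma = 0 := le_antisymm (by linarith) t1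
    have k2 : ((m j : ℤ) - 1) * La = 0 := le_antisymm (by linarith) t2
    have k3 : (La : ℤ) * Ma = Sa := le_antisymm (by linarith) hSa1
    have hlj : l j = 1 := by
      by_contra hne
      have h2 : (2 : ℤ) ≤ (l j : ℤ) := by exact_mod_cast (by omega : 2 ≤ l j)
      have hMaz : (Ma : ℤ) = 0 := by
        rcases mul_eq_zero.mp k1 with h' | h'
        · exfalso; linarith
        · exact h'
      have hMaz' : Ma = 0 := by exact_mod_cast hMaz
      obtain ⟨t, ht⟩ := hEne
      have hmt : m t = 0 := (Finset.sum_eq_zero_iff.mp (hMa ▸ hMaz')) t ht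
      have hlt : 1 ≤ l t := by have := hlm t; omega
      have hLa1 : 1 ≤ La := le_trans hlt (Finset.single_le_sum (f := l) (fun _ _ => Nat.zero_le _) ht)
      have hmj2 : 2 ≤ m j := by omega
      have hmj2' : (2 : ℤ) ≤ (m j : ℤ) := by exact_mod_cast hmj2
      have hLa1' : (1 : ℤ) ≤ (La : ℤ) := by exact_mod_cast hLa1
      have : (1 : ℤ) * La ≤ ((m j : ℤ) - 1) * La :=
        mul_le_mul_of_nonneg_right (by linarith) (by linarith)
      linarith
    have hmj : m j = 1 := by
      by_contra hne
      have h2 : (2 : ℤ) ≤ (m j : ℤ) := by exact_mod_cast (by omega : 2 ≤ m j)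
      have hLaz : (La : ℤ) = 0 := by
        rcases mul_eq_zero.mp k2 with h' | h'
        · exfalso; linarith
        · exact h'
      have hLaz' : La = 0 := by exact_mod_cast hLaz
      obtain ⟨t, ht⟩ := hEne
      have hlt : l t = 0 :=
        (Finset.sum_eq_zero_iff.mp (hLa ▸ hLaz')) t ht
      have hmt : 1 ≤ m t := by have := hlm t; omega
      have hMa1 : 1 ≤ Ma := le_trans hmt (Finset.single_le_sum (f := m) (fun _ _ => Nat.zero_le _) ht)
      have hlj2 : 2 ≤ l j := by omega
      have hlj2' : (2 : ℤ) ≤ (l j : ℤ) := by exact_mod_cast hlj2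
      have hMa1' : (1 : ℤ) ≤ (Ma : ℤ) := by exact_mod_cast hMa1
      have : (1 : ℤ) * Ma ≤ ((l j : ℤ) - 1) * Ma :=
        mul_le_mul_of_nonneg_right (by linarith) (by linarith)
      linarith
    have k3N : La * Ma = Sa := by exact_mod_cast k3
    have hLa1 : 1 ≤ La := by omega
    have hMa1 : 1 ≤ Ma := by omega
    have hex1 : ∃ i ∈ E, 1 ≤ l i := by
      by_contra hc
      push_neg at hc
      have : La = 0 := by
        rw [hLa]; exact Finset.sum_eq_zero fun t ht => by have := hc t ht; omega
      omega
    have hex2 : ∃ i ∈ E, 1 ≤ m i := by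
      by_contra hc
      push_neg at hc
      have : Ma = 0 := by
        rw [hMa]; exact Finset.sum_eq_zero fun t ht => by have := hc t ht; omega
      omega
    obtain ⟨i0, hi0E, hli0⟩ := hex1
    obtain ⟨k0, hk0E, hmk0⟩ := hex2
    have hik : i0 = k0 := by
      by_contra hne
      have hc := sum_mul_cross l m E hne hi0E hk0E
      rw [← hSa, ← hLa, ← hMa, k3N] at hc
      have : 1 ≤ l i0 * m k0 := Nat.one_le_iff_ne_zero.mpr (Nat.mul_ne_zero (by omega) (by omega))
      omega
    subst hik
    have hpair : l i0 = 1 ∧ m i0 = 1 := by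
      have := hmax i0
      rw [hlj, hmj] at this
      omega
    have hall : ∀ t, t = j ∨ t = i0 := by
      intro t
      by_contra hc
      push_neg at hc
      obtain ⟨htj, hti⟩ := hc
      have htE : t ∈ E := Finset.mem_erase.mpr ⟨htj, Finset.mem_univ t⟩
      have h1 := hlm t
      rcases Nat.eq_zero_or_pos (l t) with h0 | h0
      · have hne : i0 ≠ t := fun he => hti he.symm
        have hc2 := sum_mul_cross l m E hne hi0E htE
        rw [← hSa, ← hLa, ← hMa, k3N] at hc2
        have : 1 ≤ l i0 * m t := Nat.one_le_iff_ne_zero.mpr (Nat.mul_ne_zero (by omega) (by omega))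
        omega
      · have hc2 := sum_mul_cross l m E hti htE hi0E
        rw [← hSa, ← hLa, ← hMa, k3N] at hc2
        have : 1 ≤ l t * m i0 := Nat.one_le_iff_ne_zero.mpr (Nat.mul_ne_zero (by omega) (by omega))
        omega
    have hji0 : j ≠ i0 := fun he => (Finset.mem_erase.mp hi0E).1 he.symm
    have huniv : (Finset.univ : Finset (Fin r)) = {j, i0} := by
      ext t
      simp only [Finset.mem_univ, true_iff, Finset.mem_insert, Finset.mem_singleton]
      exact hall t
    have hrval : r = 2 := by
      have h1 : (Finset.univ : Finset (Fin r)).card = r := by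
        rw [Finset.card_univ, Fintype.card_fin]
      rw [huniv, Finset.card_pair hji0] at h1
      omega
    refine ⟨hrval, fun i => ?_⟩
    rcases hall i with rfl | rfl
    · exact ⟨hlj, hmj⟩
    · exact hpair
  · rintro (h1 | ⟨h2, hall⟩)
    · subst h1
      have el : ∑ i, l i = l j := by
        rw [Fin.sum_univ_one]; exact congrArg l (Subsingleton.elim 0 j)
      have em : ∑ i, m i = m j := by
        rw [Fin.sum_univ_one]; exact congrArg m (Subsingleton.elim 0 j)
      have es : (∑ i, (l i : ℤ) * m i) = (l j : ℤ) * m j := by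
        rw [Fin.sum_univ_one]
        exact congrArg (fun t => (l t : ℤ) * m t) (Subsingleton.elim 0 j)
      rw [el, em, es]

      ring
    · subst h2
      have e0 := hall 0
      have e1 := hall 1
      rw [Fin.sum_univ_two, Fin.sum_univ_two, Fin.sum_univ_two,
        e0.1, e0.2, e1.1, e1.2, (hall j).1, (hall j).2]
      norm_num
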